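/- E_0^ω is not Borel reducible to any Σ⁰₃ equivalence relation on a Polish space. -/

import Mathlib

/-- `E₀` on Cantor space: eventual agreement. -/
def E0rel (x y : ℕ → Bool) : Prop := ∃ m, ∀ n ≥ m, x n = y n

/-- A set is `Σ⁰₃` if it is a countable union of `Gδ` sets. -/
def IsSigma03 {X : Type*} [TopologicalSpace X] (A : Set X) : Prop :=
  ∃ U : ℕ → ℕ → Set X, (∀ n m, IsOpen (U n m)) ∧ A = ⋃ n, ⋂ m, U n m

open Set Topology Filter TopologicalSpace

namespace E0omegaAux

lemma baireSpace_of_polish (α : Type*) [TopologicalSpace α] [PolishSpace α] : BaireSpace α := by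
  infer_instance

instance : BaireSpace (ℕ → ℕ → Bool) := inferInstance
instance : BaireSpace (ℕ → ℕ) := inferInstance

/-- A measurable function into a second countable space is continuous on a comeager set. -/
theorem exists_residual_continuousOn {α β : Type*} [TopologicalSpace α]
    [MeasurableSpace α] [BorelSpace α] [TopologicalSpace β] [SecondCountableTopology β]
    [MeasurableSpace β] [BorelSpace β] {f : α → β} (hf : Measurable f) :
    ∃ D : Set α, D ∈ residual α ∧ ContinuousOn f D := by
  have key : ∀ b : countableBasis β, ∃ u : Set α, IsOpen u ∧ (f ⁻¹' (b : Set β)) =ᵇ u := by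
    intro b
    have hb : IsOpen (b : Set β) := isOpen_of_mem_countableBasis b.2
    exact (hf hb.measurableSet).residualEq_isOpen
  choose u hu hub using key
  refine ⟨⋂ b : countableBasis β, {x | x ∈ f ⁻¹' (b : Set β) ↔ x ∈ u b}, ?_, ?_⟩
  · exact countable_iInter_mem.2 fun b => (eventuallyEq_set.1 (hub b))
  · intro x hx
    rw [ContinuousWithinAt, tendsto_def]
    intro s hs
    obtain ⟨b, hb, hfx, hbs⟩ := (isBasis_countableBasis β).mem_nhds_iff.1 hs
    have hxb : x ∈ u ⟨b, hb⟩ := (mem_iInter.1 hx ⟨b, hb⟩).1 hfx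
    refine mem_nhdsWithin.2 ⟨u ⟨b, hb⟩, hu _, hxb, ?_⟩
    rintro y ⟨hyu, hyR⟩
    exact hbs ((mem_iInter.1 hyR ⟨b, hb⟩).2 hyu)

/-- In a product of discrete spaces, every open set contains a finite cylinder
around each of its points. -/
lemma exists_finset_cylinder_subset {ι : Type*} {π : ι → Type*} [∀ i, TopologicalSpace (π i)]
    [∀ i, DiscreteTopology (π i)] {O : Set (∀ i, π i)} (hO : IsOpen O) {g : ∀ i, π i}
    (hg : g ∈ O) : ∃ I : Finset ι, ∀ g', (∀ i ∈ I, g' i = g i) → g' ∈ O := by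
  obtain ⟨I, v, hv, hsub⟩ := isOpen_pi_iff.1 hO g hg
  refine ⟨I, fun g' hg' => hsub ?_⟩
  intro i hi
  rw [hg' i hi]
  exact (hv i hi).2

/-- Open sets in `ℕ → ℕ → Bool` contain square cylinders around each of their points. -/
lemma exists_level_cylinder_subset {O : Set (ℕ → ℕ → Bool)} (hO : IsOpen O)
    {z : ℕ → ℕ → Bool} (hz : z ∈ O) :
    ∃ L : ℕ, ∀ z' : ℕ → ℕ → Bool, (∀ a < L, ∀ b < L, z' a b = z a b) → z' ∈ O := by
  classical
  obtain ⟨I, v, hv, hsub⟩ := isOpen_pi_iff.1 hO z hz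
  have h2 : ∀ a, a ∈ I → ∃ J : Finset ℕ, ∀ w : ℕ → Bool,
      (∀ b ∈ J, w b = z a b) → w ∈ v a := by
    intro a ha
    exact exists_finset_cylinder_subset (hv a ha).1 (hv a ha).2
  choose J hJ using h2
  refine ⟨(I.sup id + 1) + I.sup (fun a => if h : a ∈ I then (J a h).sup id + 1 else 0),
    fun z' hz' => hsub ?_⟩
  intro a ha
  have ha' : a ∈ I := ha
  have haL : a < I.sup id + 1 := Nat.lt_succ_of_le (Finset.le_sup (f := id) ha')
  refine hJ a ha' (z' a) ?_
  intro b hb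
  have hbL : b < (J a ha').sup id + 1 := Nat.lt_succ_of_le (Finset.le_sup (f := id) hb)
  have hble : (J a ha').sup id + 1 ≤
      I.sup (fun a => if h : a ∈ I then (J a h).sup id + 1 else 0) := by
    have h6 := Finset.le_sup (f := fun a => if h : a ∈ I then (J a h).sup id + 1 else 0) ha'
    simpa [dif_pos ha'] using h6
  exact hz' a (by omega) b (by omega)

/-- Enumeration of finite subsets of `ℕ`. -/
def flipSet (m : ℕ) : Finset ℕ := Denumerable.ofNat (Finset ℕ) m

lemma flipSet_surjective : Function.Surjective flipSet := by
  intro s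
  refine ⟨@Encodable.encode _ Denumerable.toEncodable s, ?_⟩
  unfold flipSet
  exact Denumerable.ofNat_encode s

/-- One column of the flip map. -/
def phicol (x : ℕ → ℕ → Bool) (a : ℕ) (m : ℕ) : ℕ → Bool :=
  fun b => Bool.xor (decide (b ∈ flipSet m)) (x a b)

/-- Flip the bits of `x` that are listed (columnwise) by `g`. -/
def phi (x : ℕ → ℕ → Bool) (g : ℕ → ℕ) : ℕ → ℕ → Bool := fun a => phicol x a (g a)

@[simp] lemma phi_apply (x : ℕ → ℕ → Bool) (g : ℕ → ℕ) (a b : ℕ) :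
    phi x g a b = Bool.xor (decide (b ∈ flipSet (g a))) (x a b) := rfl

lemma continuous_phi (x : ℕ → ℕ → Bool) : Continuous (phi x) := by
  refine continuous_pi fun a => ?_
  show Continuous ((phicol x a) ∘ (fun g : ℕ → ℕ => g a))
  exact continuous_of_discreteTopology.comp (continuous_apply a)

lemma e0_phi (x : ℕ → ℕ → Bool) (g : ℕ → ℕ) (a : ℕ) : E0rel (x a) (phi x g a) := by
  refine ⟨(flipSet (g a)).sup id + 1, fun b hb => ?_⟩
  have hmem : b ∉ flipSet (g a) := by
    intro hmem
    have := Finset.le_sup (f := id) hmem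
    simp only [id] at this
    omega
  simp [phi_apply, hmem]

/-- Bitwise xor translation of `ℕ → ℕ → Bool`. -/
def tau (s z : ℕ → ℕ → Bool) : ℕ → ℕ → Bool := fun a b => Bool.xor (s a b) (z a b)

lemma continuous_tau (s : ℕ → ℕ → Bool) : Continuous (tau s) := by
  refine continuous_pi fun a => continuous_pi fun b => ?_
  show Continuous ((fun v : Bool => Bool.xor (s a b) v) ∘
    ((fun w : ℕ → Bool => w b) ∘ (fun z : ℕ → ℕ → Bool => z a)))
  exact continuous_of_discreteTopology.comp ((continuous_apply b).comp (continuous_apply a))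

lemma tau_tau (s z : ℕ → ℕ → Bool) : tau s (tau s z) = z := by
  funext a b
  cases h1 : s a b <;> cases h2 : z a b <;> simp [tau, h1, h2]

/-- `tau s` as a homeomorphism. -/
def tauHomeo (s : ℕ → ℕ → Bool) : (ℕ → ℕ → Bool) ≃ₜ (ℕ → ℕ → Bool) where
  toFun := tau s
  invFun := tau s
  left_inv := tau_tau s
  right_inv := tau_tau s
  continuous_toFun := continuous_tau s
  continuous_invFun := continuous_tau s

lemma dense_tau_preimage (s : ℕ → ℕ → Bool) {A : Set (ℕ → ℕ → Bool)} (hA : Dense A) :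
    Dense (tau s ⁻¹' A) := by
  rw [dense_iff_closure_eq]
  have : tau s ⁻¹' A = (tauHomeo s) ⁻¹' A := rfl
  rw [this, ← Homeomorph.preimage_closure, dense_iff_closure_eq.1 hA]
  rfl

/-- Padding a list into an element of `ℕ → ℕ`. -/
def pad (l : List ℕ) : ℕ → ℕ := fun i => l.getD i 0

lemma not_isMeagre_of_mem_residual {α : Type*} [TopologicalSpace α] [BaireSpace α] [Nonempty α]
    {s : Set α} (hs : s ∈ residual α) : ¬ IsMeagre s := by
  intro h
  have h2 : s ∩ sᶜ ∈ residual α := inter_mem hs h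
  have hd : Dense (s ∩ sᶜ) := dense_of_mem_residual h2
  simpa using hd.nonempty

lemma not_isMeagre_open {α : Type*} [TopologicalSpace α] [BaireSpace α] {Q : Set α}
    (hQ : IsOpen Q) (hne : Q.Nonempty) : ¬ IsMeagre Q := by
  intro h
  have hd : Dense Qᶜ := dense_of_mem_residual h
  obtain ⟨y, hy1, hy2⟩ := hd.inter_open_nonempty Q hQ hne
  exact hy2 hy1

lemma isMeagre_union {α : Type*} [TopologicalSpace α] {s t : Set α} (hs : IsMeagre s)
    (ht : IsMeagre t) : IsMeagre (s ∪ t) := by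
  rw [IsMeagre, compl_union]
  exact inter_mem hs ht

/-- A nonmeager `Gδ` set is comeager in some nonempty open set. -/
lemma gdelta_localization {α : Type*} [TopologicalSpace α] {O : ℕ → Set α}
    (ho : ∀ m, IsOpen (O m)) (h : ¬ IsMeagre (⋂ m, O m)) :
    ∃ U : Set α, IsOpen U ∧ U.Nonempty ∧ IsMeagre (U \ ⋂ m, O m) := by
  have hfm : ∀ m, IsMeagre (closure (O m) \ O m) := by
    intro m
    have hcl : IsClosed (closure (O m) \ O m) := isClosed_closure.sdiff (ho m)
    have hint : interior (closure (O m) \ O m) = ∅ := by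
      by_contra hne
      obtain ⟨w, hw⟩ := nonempty_iff_ne_empty.2 hne
      have hw1 : w ∈ closure (O m) := (interior_subset hw).1
      obtain ⟨w', hw'1, hw'2⟩ := mem_closure_iff.1 hw1 _ isOpen_interior hw
      exact (interior_subset hw'1).2 hw'2
    rw [IsMeagre]
    exact residual_of_dense_open hcl.isOpen_compl (interior_eq_empty_iff_dense_compl.1 hint)
  have hM : IsMeagre (⋃ m, closure (O m) \ O m) := isMeagre_iUnion hfm
  have hK1 : (⋂ m, closure (O m)) \ (⋂ m, O m) ⊆ ⋃ m, closure (O m) \ O m := by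
    rintro w ⟨hw1, hw2⟩
    rw [mem_iInter] at hw1
    obtain ⟨m, hm⟩ : ∃ m, w ∉ O m := by
      by_contra hcon
      push_neg at hcon
      exact hw2 (mem_iInter.2 hcon)
    exact mem_iUnion.2 ⟨m, hw1 m, hm⟩
  have hKne : (interior (⋂ m, closure (O m))).Nonempty := by
    by_contra hne
    have hKcl : IsClosed (⋂ m, closure (O m)) := isClosed_iInter fun m => isClosed_closure
    have hKint : interior (⋂ m, closure (O m)) = ∅ := not_nonempty_iff_eq_empty.1 hne
    have hmK : IsMeagre (⋂ m, closure (O m)) := by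
      rw [IsMeagre]
      exact residual_of_dense_open hKcl.isOpen_compl (interior_eq_empty_iff_dense_compl.1 hKint)
    exact h (hmK.mono (iInter_mono fun m => subset_closure))
  refine ⟨interior (⋂ m, closure (O m)), isOpen_interior, hKne, ?_⟩
  refine hM.mono ?_
  intro w hw
  exact hK1 ⟨interior_subset hw.1, hw.2⟩

end E0omegaAux

open E0omegaAux

/-- `E₀^ω` is not Borel reducible to any `Σ⁰₃` equivalence relation on a Polish space. -/
theorem E0omega_not_reducible_to_Sigma03
    (X : Type*) [TopologicalSpace X] [PolishSpace X] [MeasurableSpace X] [BorelSpace X]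
    (E : X → X → Prop) (hE : Equivalence E)
    (hE3 : IsSigma03 {p : X × X | E p.1 p.2}) :
    ¬ ∃ f : (ℕ → ℕ → Bool) → X, Measurable f ∧
        ∀ x y : ℕ → ℕ → Bool, (∀ n, E0rel (x n) (y n)) ↔ E (f x) (f y) := by
  classical
  rintro ⟨f, hf, hred⟩
  obtain ⟨W, hWopen, hWeq⟩ := hE3
  -- continuity of f on a comeager set
  obtain ⟨D₀, hD₀res, hD₀cont⟩ := exists_residual_continuousOn hf
  obtain ⟨Dt, hDtsub, hDtgd, hDtdense⟩ := mem_residual.1 hD₀res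
  obtain ⟨S, hSopen, hScnt, hSeq⟩ := hDtgd
  obtain ⟨G, hGrange⟩ := (hScnt.insert univ).exists_eq_range ⟨univ, mem_insert _ _⟩
  have hGopen : ∀ m, IsOpen (G m) := by
    intro m
    have hmem : G m ∈ insert univ S := by rw [hGrange]; exact mem_range_self m
    rcases hmem with h | h
    · rw [h]; exact isOpen_univ
    · exact hSopen _ h
  have hDeq : (⋂ m, G m) = Dt := by
    rw [hSeq, ← sInter_range, ← hGrange, sInter_insert, univ_inter]
  set D : Set (ℕ → ℕ → Bool) := ⋂ m, G m with hD
  have hDdense : Dense D := hDeq ▸ hDtdense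
  have hDcont : ContinuousOn f D := hD₀cont.mono (hDeq ▸ hDtsub)
  have hDsubG : ∀ m, D ⊆ G m := fun m => iInter_subset G m
  have hDres : D ∈ residual (ℕ → ℕ → Bool) := by
    rw [hDeq]
    exact residual_of_dense_Gδ ⟨S, hSopen, hScnt, hSeq⟩ hDtdense
  -- pattern of flips coded by g
  set pat : (ℕ → ℕ) → (ℕ → ℕ → Bool) := fun g a b => decide (b ∈ flipSet (g a)) with hpat
  have hphi_tau : ∀ (x : ℕ → ℕ → Bool) (g : ℕ → ℕ), phi x g = tau (pat g) x := fun x g => rfl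
  -- a generic point x
  have hXres : (⋂ (m : ℕ), ⋂ (l : List ℕ), tau (pat (pad l)) ⁻¹' (G m))
      ∈ residual (ℕ → ℕ → Bool) := by
    refine countable_iInter_mem.2 fun m => countable_iInter_mem.2 fun l => ?_
    exact residual_of_dense_open ((hGopen m).preimage (continuous_tau _))
      (dense_tau_preimage _ (hDdense.mono (hDsubG m)))
  obtain ⟨x, hxD, hxX⟩ := (dense_of_mem_residual (inter_mem hDres hXres)).nonempty
  -- the set of g with phi x g ∈ D is comeager
  have hphiD_res : {g : ℕ → ℕ | phi x g ∈ D} ∈ residual (ℕ → ℕ) := by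
    have heq : {g : ℕ → ℕ | phi x g ∈ D} = ⋂ m, {g : ℕ → ℕ | phi x g ∈ G m} := by
      ext g
      simp [hD, mem_iInter]
    rw [heq]
    refine countable_iInter_mem.2 fun m => ?_
    refine residual_of_dense_open ((hGopen m).preimage (continuous_phi x)) ?_
    rw [dense_iff_inter_open]
    rintro O hO ⟨g₀, hg₀⟩
    obtain ⟨I, hI⟩ := exists_finset_cylinder_subset hO hg₀
    set N : ℕ := I.sup id + 1 with hN
    set l : List ℕ := List.ofFn (fun j : Fin N => g₀ j) with hl
    have hlen : l.length = N := by rw [hl, List.length_ofFn]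
    have hpadeq : ∀ i ∈ I, pad l i = g₀ i := by
      intro i hi
      have hiN : i < l.length := by
        rw [hlen, hN]
        exact Nat.lt_succ_of_le (Finset.le_sup (f := id) hi)
      rw [pad, List.getD_eq_getElem l 0 hiN, List.getElem_ofFn]
    have h1 : pad l ∈ O := hI _ hpadeq
    have h2 : phi x (pad l) ∈ G m := by
      rw [hphi_tau]
      exact mem_iInter.1 (mem_iInter.1 hxX m) l
    exact ⟨pad l, h1, h2⟩
  -- the pieces P n
  set P : ℕ → Set (ℕ → ℕ) := fun n =>
    {g : ℕ → ℕ | phi x g ∈ D ∧ ∀ m, (f (phi x g), f x) ∈ W n m} with hP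
  have hcover : {g : ℕ → ℕ | phi x g ∈ D} ⊆ ⋃ n, P n := by
    intro g hg
    have hExy : E (f x) (f (phi x g)) := (hred x (phi x g)).1 (e0_phi x g)
    have hmem : (f (phi x g), f x) ∈ {p : X × X | E p.1 p.2} := hE.symm hExy
    rw [hWeq] at hmem
    obtain ⟨n, hn⟩ := mem_iUnion.1 hmem
    exact mem_iUnion.2 ⟨n, hg, fun m => mem_iInter.1 hn m⟩
  obtain ⟨n, hPnm⟩ : ∃ n, ¬ IsMeagre (P n) := by
    by_contra hcon
    push_neg at hcon
    exact E0omegaAux.not_isMeagre_of_mem_residual hphiD_res ((isMeagre_iUnion hcon).mono hcover)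
  -- sections of the W n m at f x
  have hsec_open : ∀ m, IsOpen {u : X | (u, f x) ∈ W n m} :=
    fun m => (hWopen n m).preimage (Continuous.prodMk continuous_id continuous_const)
  have hV : ∀ m, ∃ V : Set (ℕ → ℕ → Bool), IsOpen V ∧
      f ⁻¹' {u : X | (u, f x) ∈ W n m} ∩ D = V ∩ D :=
    fun m => continuousOn_iff'.1 hDcont _ (hsec_open m)
  choose V hVopen hVeq using hV
  have hPsub : P n ⊆ ⋂ m, phi x ⁻¹' V m := by
    intro g hg
    refine mem_iInter.2 fun m => ?_
    have hmem : phi x g ∈ f ⁻¹' {u : X | (u, f x) ∈ W n m} ∩ D := ⟨hg.2 m, hg.1⟩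
    rw [hVeq m] at hmem
    exact hmem.1
  obtain ⟨U, hUopen, hUne, hUmeag⟩ := gdelta_localization
    (fun m => (hVopen m).preimage (continuous_phi x))
    (fun h => hPnm (h.mono hPsub))
  have hUP : IsMeagre (U \ P n) := by
    have hcm : IsMeagre {g : ℕ → ℕ | phi x g ∈ D}ᶜ := by
      rw [IsMeagre, compl_compl]
      exact hphiD_res
    refine (isMeagre_union hUmeag hcm).mono ?_
    intro g hg
    by_cases hD' : phi x g ∈ D
    · left
      refine ⟨hg.1, fun hmem => hg.2 ?_⟩
      refine ⟨hD', fun m => ?_⟩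
      have h3 : phi x g ∈ V m ∩ D := ⟨mem_iInter.1 hmem m, hD'⟩
      rw [← hVeq m] at h3
      exact h3.1
    · right
      exact hD'
  -- a selection principle inside U
  have hSel : ∀ Q : Set (ℕ → ℕ), IsOpen Q → Q.Nonempty → Q ⊆ U → ∃ g, g ∈ P n ∧ g ∈ Q := by
    intro Q hQo hQne hQU
    by_contra hcon
    push_neg at hcon
    have hsub : Q ⊆ U \ P n := fun g hg => ⟨hQU hg, fun hPg => hcon g hPg hg⟩
    exact not_isMeagre_open hQo hQne (hUP.mono hsub)
  -- the stem inside U, and the free column c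
  obtain ⟨u₀, hu₀⟩ := hUne
  obtain ⟨I, hIcyl⟩ := exists_finset_cylinder_subset hUopen hu₀
  set c : ℕ := I.sup id + 1 with hc
  have hcI : c ∉ I := by
    intro h
    have := Finset.le_sup (f := id) h
    simp only [id] at this
    omega
  set Stem : Set (ℕ → ℕ) := {g : ℕ → ℕ | ∀ i ∈ I, g i = u₀ i} with hStem
  have hStemOpen : IsOpen Stem := by
    have heq : Stem = ⋂ i ∈ I, (fun g : ℕ → ℕ => g i) ⁻¹' {u₀ i} := by
      ext g
      simp [hStem]
    rw [heq]
    exact isOpen_biInter_finset fun i _ => (isOpen_discrete _).preimage (continuous_apply i)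
  have hStemU : Stem ⊆ U := fun g hg => hIcyl g hg
  have hStemNe : Stem.Nonempty := ⟨u₀, fun i _ => rfl⟩
  -- the invariant
  set Inv : ℕ → (ℕ → ℕ) → ℕ → Prop := fun k g L =>
    g ∈ P n ∧ g ∈ Stem ∧ ∀ m < k,
      (∀ z : ℕ → ℕ → Bool, (∀ a < L, ∀ b < L, z a b = phi x g a b) → z ∈ G m) ∧
      (∀ z : ℕ → ℕ → Bool, z ∈ D → (∀ a < L, ∀ b < L, z a b = phi x g a b) →
        (f z, f x) ∈ W n m) with hInv
  have hbase : ∃ g, Inv 0 g (c + 1) := by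
    obtain ⟨g, hgP, hgS⟩ := hSel Stem hStemOpen hStemNe hStemU
    exact ⟨g, hgP, hgS, fun m hm => absurd hm (Nat.not_lt_zero m)⟩
  have hstep : ∀ k g L, Inv k g L → ∃ g' L', Inv (k + 1) g' L' ∧ L < L' ∧
      (∀ a < L, ∀ b < L, phi x g' a b = phi x g a b) ∧ phi x g' c L = !(x c L) := by
    rintro k g L ⟨hgP, hgS, -⟩
    set Q : Set (ℕ → ℕ) := Stem ∩ {g' : ℕ → ℕ | ∀ a < L, ∀ b < L, phi x g' a b = phi x g a b}
      ∩ {g' : ℕ → ℕ | L ∈ flipSet (g' c)} with hQ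
    have hQo : IsOpen Q := by
      refine (hStemOpen.inter ?_).inter ?_
      · have heq : {g' : ℕ → ℕ | ∀ a < L, ∀ b < L, phi x g' a b = phi x g a b}
            = ⋂ (a : Fin L), ⋂ (b : Fin L),
              (fun g' : ℕ → ℕ => phi x g' (a : ℕ) (b : ℕ)) ⁻¹' {phi x g (a : ℕ) (b : ℕ)} := by
          ext g'
          simp only [mem_iInter, mem_setOf_eq, mem_preimage, mem_singleton_iff]
          exact ⟨fun h a b => h a a.2 b b.2, fun h a ha b hb => h ⟨a, ha⟩ ⟨b, hb⟩⟩
        rw [heq]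
        refine isOpen_iInter_of_finite fun a => isOpen_iInter_of_finite fun b => ?_
        refine (isOpen_discrete _).preimage ?_
        show Continuous ((fun w : ℕ → Bool => w (b : ℕ)) ∘
          ((fun z : ℕ → ℕ → Bool => z (a : ℕ)) ∘ (phi x)))
        exact (continuous_apply _).comp ((continuous_apply _).comp (continuous_phi x))
      · show IsOpen ((fun g' : ℕ → ℕ => g' c) ⁻¹' {m : ℕ | L ∈ flipSet m})
        exact (isOpen_discrete _).preimage (continuous_apply c)
    obtain ⟨mc, hmc⟩ := flipSet_surjective (insert L (flipSet (g c)))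
    have hQne : Q.Nonempty := by
      refine ⟨Function.update g c mc, ⟨?_, ?_⟩, ?_⟩
      · intro i hi
        have hic : i ≠ c := fun h => hcI (by rw [← h]; exact hi)
        rw [Function.update_of_ne hic]
        exact hgS i hi
      · intro a ha b hb
        by_cases hac : a = c
        · rw [hac]
          have hbne : b ≠ L := Nat.ne_of_lt hb
          simp [phi_apply, Function.update_self, hmc, Finset.mem_insert, hbne]
        · simp only [phi_apply, Function.update_of_ne hac]
      · show L ∈ flipSet (Function.update g c mc c)
        rw [Function.update_self, hmc]
        exact Finset.mem_insert_self _ _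
    obtain ⟨g', hg'P, hg'Q⟩ := hSel Q hQo hQne (fun g' hg' => hStemU hg'.1.1)
    have hz'D : phi x g' ∈ D := hg'P.1
    have htarget : IsOpen (⋂ m : Fin (k + 1), {u : X | (u, f x) ∈ W n m}) :=
      isOpen_iInter_of_finite fun m => hsec_open m
    have hfz' : f (phi x g') ∈ ⋂ m : Fin (k + 1), {u : X | (u, f x) ∈ W n m} :=
      mem_iInter.2 fun m => hg'P.2 m
    have hnhd : f ⁻¹' (⋂ m : Fin (k + 1), {u : X | (u, f x) ∈ W n m}) ∈ 𝓝[D] (phi x g') :=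
      hDcont _ hz'D (htarget.mem_nhds hfz')
    obtain ⟨V', hV'open, hz'V', hV'sub⟩ := mem_nhdsWithin.1 hnhd
    have hGk : IsOpen (⋂ m : Fin (k + 1), G m) := isOpen_iInter_of_finite fun m => hGopen m
    have hz'G : phi x g' ∈ ⋂ m : Fin (k + 1), G m := mem_iInter.2 fun m => hDsubG m hz'D
    obtain ⟨L₀, hL₀⟩ := exists_level_cylinder_subset (hGk.inter hV'open) ⟨hz'G, hz'V'⟩
    refine ⟨g', max L₀ (L + 1), ⟨hg'P, hg'Q.1.1, ?_⟩, ?_, hg'Q.1.2, ?_⟩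
    · intro m hm
      constructor
      · intro z hz
        have hzin : z ∈ (⋂ m : Fin (k + 1), G m) ∩ V' :=
          hL₀ z (fun a ha b hb => hz a (lt_of_lt_of_le ha (le_max_left _ _))
            b (lt_of_lt_of_le hb (le_max_left _ _)))
        exact mem_iInter.1 hzin.1 ⟨m, hm⟩
      · intro z hzD hz
        have hzin : z ∈ (⋂ m : Fin (k + 1), G m) ∩ V' :=
          hL₀ z (fun a ha b hb => hz a (lt_of_lt_of_le ha (le_max_left _ _))
            b (lt_of_lt_of_le hb (le_max_left _ _)))
        have hzf := hV'sub ⟨hzin.2, hzD⟩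
        exact mem_iInter.1 hzf ⟨m, hm⟩
    · exact lt_of_lt_of_le (Nat.lt_succ_self L) (le_max_right _ _)
    · have hmem : L ∈ flipSet (g' c) := hg'Q.2
      simp [phi_apply, hmem]
  -- build the sequence
  choose stepg stepL stepInv stepLt stepAgree stepFlip using hstep
  obtain ⟨g0, hg0⟩ := hbase
  let seq : ∀ k : ℕ, {p : (ℕ → ℕ) × ℕ // Inv k p.1 p.2} := fun k =>
    Nat.rec ⟨(g0, c + 1), hg0⟩
      (fun k ih => ⟨(stepg k ih.1.1 ih.1.2 ih.2, stepL k ih.1.1 ih.1.2 ih.2),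
        stepInv k ih.1.1 ih.1.2 ih.2⟩) k
  have hInvs : ∀ k, Inv k (seq k).1.1 (seq k).1.2 := fun k => (seq k).2
  have hLt : ∀ k, (seq k).1.2 < (seq (k + 1)).1.2 :=
    fun k => stepLt k (seq k).1.1 (seq k).1.2 (seq k).2
  have hAgr : ∀ k, ∀ a < (seq k).1.2, ∀ b < (seq k).1.2,
      phi x (seq (k + 1)).1.1 a b = phi x (seq k).1.1 a b :=
    fun k => stepAgree k (seq k).1.1 (seq k).1.2 (seq k).2
  have hFlip : ∀ k, phi x (seq (k + 1)).1.1 c ((seq k).1.2) = !(x c ((seq k).1.2)) :=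
    fun k => stepFlip k (seq k).1.1 (seq k).1.2 (seq k).2
  set Ls : ℕ → ℕ := fun k => (seq k).1.2 with hLs
  set gs : ℕ → ℕ → ℕ := fun k => (seq k).1.1 with hgs
  have hLmono : StrictMono Ls := strictMono_nat_of_lt_succ hLt
  have hLge : ∀ k, k ≤ Ls k := fun k => hLmono.le_apply
  have hL0 : Ls 0 = c + 1 := rfl
  have hLc : ∀ k, c < Ls k := by
    intro k
    have h1 : Ls 0 ≤ Ls k := hLmono.monotone (Nat.zero_le k)
    omega
  have hchain : ∀ j k, j ≤ k → ∀ a < Ls j, ∀ b < Ls j,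
      phi x (gs k) a b = phi x (gs j) a b := by
    intro j k hjk
    induction k, hjk using Nat.le_induction with
    | base => intro a _ b _; rfl
    | succ k hjk ih =>
      intro a ha b hb
      have hj : Ls j ≤ Ls k := hLmono.monotone hjk
      rw [hAgr k a (lt_of_lt_of_le ha hj) b (lt_of_lt_of_le hb hj)]
      exact ih a ha b hb
  set y : ℕ → ℕ → Bool := fun a b => phi x (gs (max a b + 1)) a b with hy
  have hystab : ∀ k, ∀ a < Ls k, ∀ b < Ls k, y a b = phi x (gs k) a b := by
    intro k a ha b hb
    rcases le_total k (max a b + 1) with h | h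
    · exact hchain k (max a b + 1) h a ha b hb
    · have ha' : a < Ls (max a b + 1) := by
        have := hLge (max a b + 1)
        omega
      have hb' : b < Ls (max a b + 1) := by
        have := hLge (max a b + 1)
        omega
      exact (hchain (max a b + 1) k h a ha' b hb').symm
  have hyD : y ∈ D := by
    refine mem_iInter.2 fun m => ?_
    have hinv := (hInvs (m + 1)).2.2 m (Nat.lt_succ_self m)
    exact hinv.1 y (fun a ha b hb => hystab (m + 1) a ha b hb)
  have hyW : ∀ m, (f y, f x) ∈ W n m := by
    intro m
    have hinv := (hInvs (m + 1)).2.2 m (Nat.lt_succ_self m)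
    exact hinv.2 y hyD (fun a ha b hb => hystab (m + 1) a ha b hb)
  have hEyx : E (f y) (f x) := by
    have hmem : (f y, f x) ∈ {p : X × X | E p.1 p.2} := by
      rw [hWeq]
      exact mem_iUnion.2 ⟨n, mem_iInter.2 hyW⟩
    exact hmem
  obtain ⟨m₀, hm₀⟩ := (hred x y).2 (hE.symm hEyx) c
  have hq : x c (Ls m₀) = y c (Ls m₀) := hm₀ (Ls m₀) (hLge m₀)
  have hy' : y c (Ls m₀) = !(x c (Ls m₀)) := by
    have h1 : y c (Ls m₀) = phi x (gs (m₀ + 1)) c (Ls m₀) :=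
      hystab (m₀ + 1) c (hLc (m₀ + 1)) (Ls m₀) (hLt m₀)
    rw [h1]
    exact hFlip m₀
  rw [hy'] at hq
  simp at hq
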